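/- Let L > 0 be a real number and let a, b ∈ ℂ satisfy a ≠ 0, b ≠ 0, a + b ≠ 0, a ≠ b, 2a + b ≠ 0, a + 2b ≠ 0, L² = −(a² + ab + b²), and e^a/a² = e^b/b² = e^{−(a+b)}/(a+b)². Then there exist λ ∈ ℂ and a three times continuously differentiable function φ : ℝ → ℂ, not identically zero on [0,L], such that λ φ(x) = −φ′(x) − φ‴(x) for all x ∈ ℝ, and φ(0) = 0, φ′(0) = 0, φ(L) + φ″(L) = 0, φ′(L) = 0. Moreover one may take λ = a b (a+b)/L³ and φ of the form φ(x) = C₁ e^{a x/L} + C₂ e^{b x/L} + C₃ e^{−(a+b) x/L}. -/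

import Mathlib

open Set

noncomputable def trip (C₁ C₂ C₃ r₁ r₂ r₃ : ℂ) : ℝ → ℂ := fun x =>
  C₁ * Complex.exp (r₁ * x) + C₂ * Complex.exp (r₂ * x) + C₃ * Complex.exp (r₃ * x)

lemma single_hasDerivAt (C r : ℂ) (x : ℝ) :
    HasDerivAt (fun x : ℝ => C * Complex.exp (r * x)) (C * r * Complex.exp (r * x)) x := by
  have h0 : HasDerivAt (fun x : ℝ => (x : ℂ)) 1 x := by
    simpa using (hasDerivAt_id x).ofReal_comp
  have h1 := (h0.const_mul r).cexp.const_mul C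
  convert h1 using 1
  · rfl
  · ring

lemma trip_hasDerivAt (C₁ C₂ C₃ r₁ r₂ r₃ : ℂ) (x : ℝ) :
    HasDerivAt (trip C₁ C₂ C₃ r₁ r₂ r₃)
      (trip (C₁*r₁) (C₂*r₂) (C₃*r₃) r₁ r₂ r₃ x) x :=
  ((single_hasDerivAt C₁ r₁ x).add (single_hasDerivAt C₂ r₂ x)).add
    (single_hasDerivAt C₃ r₃ x)

lemma trip_deriv (C₁ C₂ C₃ r₁ r₂ r₃ : ℂ) :
    deriv (trip C₁ C₂ C₃ r₁ r₂ r₃) = trip (C₁*r₁) (C₂*r₂) (C₃*r₃) r₁ r₂ r₃ :=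
  funext fun x => (trip_hasDerivAt C₁ C₂ C₃ r₁ r₂ r₃ x).deriv

lemma trip_contDiff (C₁ C₂ C₃ r₁ r₂ r₃ : ℂ) (n : ℕ∞) :
    ContDiff ℝ n (trip C₁ C₂ C₃ r₁ r₂ r₃) := by
  have base : ∀ r : ℂ, ContDiff ℝ n fun x : ℝ => Complex.exp (r * x) := fun r =>
    Complex.contDiff_exp.comp (contDiff_const.mul Complex.ofRealCLM.contDiff)
  exact ((contDiff_const.mul (base r₁)).add (contDiff_const.mul (base r₂))).add
    (contDiff_const.mul (base r₃))

theorem kdv_critical_length_gives_eigenfunction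
    (L : ℝ) (hL : 0 < L) (a b : ℂ)
    (ha : a ≠ 0) (hb : b ≠ 0) (hab : a + b ≠ 0) (hne : a ≠ b)
    (h2ab : 2 * a + b ≠ 0) (ha2b : a + 2 * b ≠ 0)
    (hLab : (L : ℂ) ^ 2 = -(a ^ 2 + a * b + b ^ 2))
    (hexp1 : Complex.exp a / a ^ 2 = Complex.exp b / b ^ 2)
    (hexp2 : Complex.exp b / b ^ 2 = Complex.exp (-(a + b)) / (a + b) ^ 2) :
    ∃ (lam : ℂ) (φ : ℝ → ℂ), ContDiff ℝ 3 φ ∧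
      (∃ x ∈ Icc (0:ℝ) L, φ x ≠ 0) ∧
      (∀ x : ℝ, lam * φ x = -(deriv φ x) - deriv (deriv (deriv φ)) x) ∧
      φ 0 = 0 ∧ deriv φ 0 = 0 ∧ φ L + deriv (deriv φ) L = 0 ∧ deriv φ L = 0 ∧
      lam = a * b * (a + b) / (L : ℂ) ^ 3 ∧
      (∃ C₁ C₂ C₃ : ℂ, φ = fun x : ℝ =>
        C₁ * Complex.exp (a * x / L) + C₂ * Complex.exp (b * x / L)
          + C₃ * Complex.exp (-(a + b) * x / L)) := by
  have hL0 : (L : ℂ) ≠ 0 := by exact_mod_cast ne_of_gt hL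
  have hk0 : Complex.exp a / a ^ 2 ≠ 0 :=
    div_ne_zero (Complex.exp_ne_zero a) (pow_ne_zero 2 ha)
  have ea : Complex.exp a = Complex.exp a / a ^ 2 * a ^ 2 := by field_simp
  have eb : Complex.exp b = Complex.exp a / a ^ 2 * b ^ 2 := by
    rw [hexp1]; field_simp
  have ec : Complex.exp (-(a + b)) = Complex.exp a / a ^ 2 * (a + b) ^ 2 := by
    rw [hexp1.trans hexp2]; field_simp
  have h1 : a / (L:ℂ) * (L:ℂ) = a := div_mul_cancel₀ a hL0
  have h2 : b / (L:ℂ) * (L:ℂ) = b := div_mul_cancel₀ b hL0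
  have h3 : -(a + b) / (L:ℂ) * (L:ℂ) = -(a + b) := div_mul_cancel₀ _ hL0
  obtain ⟨k, hk⟩ : ∃ k : ℂ, Complex.exp a / a ^ 2 = k := ⟨_, rfl⟩
  rw [hk] at ea eb ec hk0
  refine ⟨a * b * (a + b) / (L : ℂ) ^ 3,
    trip (a + 2*b) (-(2*a + b)) (a - b) (a/L) (b/L) (-(a+b)/L),
    trip_contDiff _ _ _ _ _ _ _, ?_, ?_, ?_, ?_, ?_, ?_, rfl, ?_⟩
  · -- nonzero at L
    refine ⟨L, ⟨le_of_lt hL, le_refl L⟩, ?_⟩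
    have : trip (a + 2*b) (-(2*a + b)) (a - b) (a/L) (b/L) (-(a+b)/L) L
        = k * ((a - b) * (a + 2 * b) * (2 * a + b)) := by
      simp only [trip, h1, h2, h3]
      rw [ea, eb, ec]; ring
    rw [this]
    exact mul_ne_zero hk0 (mul_ne_zero (mul_ne_zero (sub_ne_zero.mpr hne) ha2b) h2ab)
  · -- ODE
    intro x
    rw [trip_deriv, trip_deriv, trip_deriv]
    simp only [trip]
    have k1 : a*b*(a+b)/(L:ℂ)^3 + a/L + (a/L)^3 = 0 := by
      field_simp
      linear_combination a * hLab
    have k2 : a*b*(a+b)/(L:ℂ)^3 + b/L + (b/L)^3 = 0 := by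
      field_simp
      linear_combination b * hLab
    have k3 : a*b*(a+b)/(L:ℂ)^3 + (-(a+b))/L + ((-(a+b))/L)^3 = 0 := by
      field_simp
      linear_combination (-(a+b)) * hLab
    linear_combination ((a + 2*b) * Complex.exp (a/(L:ℂ) * x)) * k1
      + ((-(2*a + b)) * Complex.exp (b/(L:ℂ) * x)) * k2
      + ((a - b) * Complex.exp (-(a+b)/(L:ℂ) * x)) * k3
  · -- φ 0 = 0
    simp only [trip, Complex.ofReal_zero, mul_zero, Complex.exp_zero, mul_one]
    ring
  · -- φ' 0 = 0
    rw [trip_deriv]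
    simp only [trip, Complex.ofReal_zero, mul_zero, Complex.exp_zero, mul_one]
    field_simp
    ring
  · -- φ L + φ'' L = 0
    rw [trip_deriv, trip_deriv]
    simp only [trip, h1, h2, h3]
    rw [ea, eb, ec]
    field_simp
    linear_combination (k * (a - b) * (a + 2*b) * (2*a + b)) * hLab
  · -- φ' L = 0
    rw [trip_deriv]
    simp only [trip, h1, h2, h3]
    rw [ea, eb, ec]
    field_simp
    ring
  · refine ⟨a + 2*b, -(2*a + b), a - b, funext fun x => ?_⟩
    simp only [trip]
    have e1 : a / (L:ℂ) * x = a * x / L := by ring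
    have e2 : b / (L:ℂ) * x = b * x / L := by ring
    have e3 : -(a+b) / (L:ℂ) * x = -(a + b) * x / L := by ring
    rw [e1, e2, e3]
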